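/- Let n_CPU, N_cell, d be positive integers with 3^d dividing N_cell, and define Ξ_calc(N_cell, n_CPU, d) = ⌈3^d/n_CPU⌉·(N_cell/3^d) for 1 ≤ n_CPU ≤ 3^d, = ⌈N_cell/(3^d·⌊n_CPU/3^d⌋)⌉ for 3^d ≤ n_CPU ≤ N_cell, and = 1 for n_CPU > N_cell. Then Ξ_calc is monotonically non-increasing in n_CPU, satisfies Ξ_calc(N_cell, 1, d) = N_cell, and Ξ_calc(N_cell, n_CPU, d) ≥ ⌈N_cell/n_CPU⌉ for all n_CPU ≤ N_cell (the checkerboard constraint can only worsen load balance relative to ideal). -/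

import Mathlib

/-- upper bound on the number of cell-processes executed by one processor. -/
def XiCalc (Ncell nCPU d : ℕ) : ℕ :=
  if nCPU ≤ 3 ^ d then (3 ^ d + nCPU - 1) / nCPU * (Ncell / 3 ^ d)
  else if nCPU ≤ Ncell then
    (Ncell + 3 ^ d * (nCPU / 3 ^ d) - 1) / (3 ^ d * (nCPU / 3 ^ d))
  else 1

lemma cdiv_le_iff {b : ℕ} (hb : 0 < b) (a m : ℕ) :
    (a + b - 1) / b ≤ m ↔ a ≤ m * b := by
  rw [Nat.div_le_iff_le_mul_add_pred hb]
  have hc : m * b = b * m := Nat.mul_comm m b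
  omega

lemma le_cdiv_mul {b : ℕ} (hb : 0 < b) (a : ℕ) : a ≤ (a + b - 1) / b * b :=
  (cdiv_le_iff hb a _).mp le_rfl

lemma cdiv_anti {b b' : ℕ} (hb : 0 < b) (h : b ≤ b') (a : ℕ) :
    (a + b' - 1) / b' ≤ (a + b - 1) / b := by
  have hb' : 0 < b' := lt_of_lt_of_le hb h
  rw [cdiv_le_iff hb']
  calc a ≤ (a + b - 1) / b * b := le_cdiv_mul hb a
    _ ≤ (a + b - 1) / b * b' := Nat.mul_le_mul_left _ h

lemma cdiv_pos {a b : ℕ} (hb : 0 < b) (ha : 0 < a) : 1 ≤ (a + b - 1) / b := by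
  rw [Nat.one_le_div_iff hb]; omega

lemma cdiv_mul_self {P k : ℕ} (hP : 0 < P) : (P * k + P - 1) / P = k := by
  have h : P * k + P - 1 = P * k + (P - 1) := by omega
  rw [h, Nat.mul_add_div hP, Nat.div_eq_of_lt (by omega)]
  omega

theorem stmt19 (Ncell d : ℕ) (hN : 0 < Ncell) (hd : 0 < d)
    (hdvd : 3 ^ d ∣ Ncell) :
    (∀ m n : ℕ, 0 < m → m ≤ n → XiCalc Ncell n d ≤ XiCalc Ncell m d) ∧
    XiCalc Ncell 1 d = Ncell ∧
    (∀ n : ℕ, 0 < n → n ≤ Ncell → (Ncell + n - 1) / n ≤ XiCalc Ncell n d) := by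
  have hP : 0 < 3 ^ d := pow_pos (by norm_num) d
  set P := 3 ^ d with hPdef
  obtain ⟨k, hk⟩ := hdvd
  have hk1 : 1 ≤ k := by
    rcases Nat.eq_zero_or_pos k with h | h
    · subst h; simp at hk; omega
    · exact h
  have hNk : Ncell / P = k := by rw [hk, Nat.mul_div_cancel_left _ hP]
  have hNP : P ≤ Ncell := by rw [hk]; exact Nat.le_mul_of_pos_right P hk1
  have hmid : ∀ n : ℕ, P < n → 0 < P * (n / P) ∧ P ≤ P * (n / P) ∧ P * (n / P) ≤ n := by
    intro n hn
    have h1 : 1 ≤ n / P := by rw [Nat.one_le_div_iff hP]; omega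
    have h2 : P * (n / P) ≤ n := by
      rw [mul_comm]; exact Nat.div_mul_le_self n P
    exact ⟨by positivity, by nlinarith, h2⟩
  refine ⟨?_, ?_, ?_⟩
  · -- monotonicity
    intro m n hm hmn
    unfold XiCalc
    rcases le_or_gt n P with hnP | hnP
    · -- both branch 1
      rw [if_pos hnP, if_pos (hmn.trans hnP)]
      exact Nat.mul_le_mul_right _ (cdiv_anti hm hmn P)
    rcases le_or_gt m P with hmP | hmP
    · -- m branch 1, n branch 2 or 3
      rw [if_pos hmP, if_neg (not_le.mpr hnP)]
      have hkle : k ≤ (P + m - 1) / m * (Ncell / P) := by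
        rw [hNk]
        calc k = 1 * k := (one_mul k).symm
          _ ≤ (P + m - 1) / m * k := Nat.mul_le_mul_right _ (cdiv_pos hm hP)
      rcases le_or_gt n Ncell with hnN | hnN
      · rw [if_pos hnN]
        obtain ⟨hpos, hPle, _⟩ := hmid n hnP
        calc (Ncell + P * (n / P) - 1) / (P * (n / P)) ≤ (Ncell + P - 1) / P :=
              cdiv_anti hP hPle Ncell
          _ = k := by rw [hk]; exact cdiv_mul_self hP
          _ ≤ _ := hkle
      · rw [if_neg (not_le.mpr hnN)]
        exact le_trans (by omega : 1 ≤ k) hkle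
    · -- m branch 2 or 3
      rw [if_neg (not_le.mpr hmP), if_neg (not_le.mpr (lt_of_lt_of_le hmP hmn))]
      rcases le_or_gt m Ncell with hmN | hmN
      · rw [if_pos hmN]
        obtain ⟨hposm, hPlem, _⟩ := hmid m hmP
        rcases le_or_gt n Ncell with hnN | hnN
        · rw [if_pos hnN]
          obtain ⟨hposn, _, _⟩ := hmid n hnP
          have : P * (m / P) ≤ P * (n / P) :=
            Nat.mul_le_mul_left _ (Nat.div_le_div_right hmn)
          exact cdiv_anti hposm this Ncell
        · rw [if_neg (not_le.mpr hnN)]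
          exact cdiv_pos hposm hN
      · have hnN : Ncell < n := lt_of_lt_of_le hmN hmn
        rw [if_neg (not_le.mpr hmN), if_neg (not_le.mpr hnN)]
  · -- value at 1
    unfold XiCalc
    rw [if_pos (by omega : 1 ≤ P), hNk]
    have : (P + 1 - 1) / 1 = P := by simp
    rw [this, ← hk]
  · -- lower bound
    intro n hn hnN
    unfold XiCalc
    rcases le_or_gt n P with hnP | hnP
    · rw [if_pos hnP, hNk]
      rw [cdiv_le_iff hn]
      calc Ncell = P * k := hk
        _ ≤ (P + n - 1) / n * n * k := Nat.mul_le_mul_right _ (le_cdiv_mul hn P)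
        _ = (P + n - 1) / n * k * n := by ring
    · rw [if_neg (not_le.mpr hnP), if_pos hnN]
      obtain ⟨hpos, _, hle⟩ := hmid n hnP
      exact cdiv_anti hpos hle Ncell
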